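/- arXiv:1007.0033 — 6 statements merged into one kernel-verified Lean document; each statement's English description precedes it below -/
import Mathlib

section
/- Let {f_i : S_i → Obj(𝒞)}_{i ∈ I} be a collection of objects of 𝒞^{S₀} such that the sets S_i are pairwise disjoint subsets of S₀. Let f : ∐_{i∈I} S_i → Obj(𝒞) be the function with f|_{S_i} = f_i, and for each k let J_k : f_k → f be the morphism J_k(x,y) = δ_{x,y} id_{f_k(x)}. Then (f, (J_k)) is the coproduct of the family {f_i} in 𝒞^{S₀}: for every object g and every family of morphisms T_i : f_i → g there is a unique morphism T : f → g with T ∘ J_k = T_k for all k. -/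
open CategoryTheory

open scoped Classical
namespace CS

universe u v

variable {S₀ : Type} {C : Type u} [Category.{v} C]

structure CObj (S₀ : Type) (C : Type u) [Category.{v} C] where
  dom : Set S₀
  val : dom → C

variable [Preadditive C]

abbrev Mor (f g : CObj S₀ C) : Type v :=
  ∀ (x : f.dom) (y : g.dom), f.val x ⟶ g.val y

/-- condition (ii) of the definition of morphisms in `𝒞^{S₀}` -/
def FinCond {f g : CObj S₀ C} (F : Mor f g) : Prop :=
  g.dom.Infinite → ∀ x : f.dom, {y : g.dom | F x y ≠ 0}.Finite

noncomputable def mcomp {f g h : CObj S₀ C} (G : Mor g h) (F : Mor f g) : Mor f h :=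
  fun x y => ∑ᶠ z : g.dom, F x z ≫ G z y

noncomputable def mid (f : CObj S₀ C) : Mor f f :=
  fun x y =>
    if h : (x : S₀) = (y : S₀) then eqToHom (congrArg f.val (Subtype.ext h)) else 0

end CS
namespace CS

/-- coproducts of families with pairwise disjoint domains in `𝒞^{S₀}`. -/
theorem stmt1 {S₀ : Type} {C : Type u} [Category.{v} C] [Preadditive C]
    (ι : Type) (objs : ι → CObj S₀ C)
    (hdisj : ∀ i j : ι, i ≠ j → Disjoint (objs i).dom (objs j).dom)
    (f : CObj S₀ C) (hdom : f.dom = ⋃ i, (objs i).dom)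
    (hval : ∀ (i : ι) (x : (objs i).dom) (hx : (x : S₀) ∈ f.dom),
      f.val ⟨(x : S₀), hx⟩ = (objs i).val x)
    (J : ∀ i : ι, Mor (objs i) f)
    (hJ : ∀ (i : ι) (x : (objs i).dom) (y : f.dom),
      J i x y =
        if h : (x : S₀) = (y : S₀) then
          eqToHom
            (((hval i x (by rw [h]; exact y.2)).symm).trans
              (congrArg f.val (Subtype.ext h)))
        else 0) :
    ∀ (g : CObj S₀ C) (T : ∀ i : ι, Mor (objs i) g), (∀ i, FinCond (T i)) →
      ∃! TT : {TT : Mor f g // FinCond TT}, ∀ i : ι, mcomp TT.1 (J i) = T i := by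
  intro g T hT
  -- every element of f.dom lies in some (objs i).dom
  have hmem : ∀ x : f.dom, ∃ i, (x : S₀) ∈ (objs i).dom := by
    intro x
    have hx : (x : S₀) ∈ ⋃ i, (objs i).dom := by rw [← hdom]; exact x.2
    simpa using hx
  choose idx hidx using hmem
  -- key computation: mcomp TT' (J i) at (x, y)
  have hcomp : ∀ (TT' : Mor f g) (i : ι) (x : (objs i).dom) (hx : (x : S₀) ∈ f.dom)
      (y : g.dom),
      mcomp TT' (J i) x y = eqToHom ((hval i x hx).symm) ≫ TT' ⟨(x : S₀), hx⟩ y := by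
    intro TT' i x hx y
    have key : (∑ᶠ z : f.dom, J i x z ≫ TT' z y)
        = J i x ⟨(x : S₀), hx⟩ ≫ TT' ⟨(x : S₀), hx⟩ y := by
      refine finsum_eq_single _ _ ?_
      intro z hz
      have hxz : ¬ ((x : S₀) = (z : S₀)) := fun h => hz (Subtype.ext h.symm)
      show J i x z ≫ TT' z y = 0
      rw [hJ i x z, dif_neg hxz, Limits.zero_comp]
    show (∑ᶠ z : f.dom, J i x z ≫ TT' z y) = _
    rw [key, hJ i x ⟨(x : S₀), hx⟩, dif_pos rfl]
  -- definition of the candidate morphism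
  set TT : Mor f g := fun x y =>
    eqToHom (hval (idx x) ⟨(x : S₀), hidx x⟩ x.2) ≫ T (idx x) ⟨(x : S₀), hidx x⟩ y with hTTdef
  have hTTfin : FinCond TT := by
    intro hinf x
    apply ((hT (idx x)) hinf ⟨(x : S₀), hidx x⟩).subset
    intro y hy
    simp only [Set.mem_setOf_eq, hTTdef] at hy ⊢
    intro h0
    exact hy (by rw [h0, Limits.comp_zero])
  -- i = idx x whenever x ∈ (objs i).dom
  have hidx_eq : ∀ (i : ι) (x : f.dom), (x : S₀) ∈ (objs i).dom → idx x = i := by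
    intro i x hxi
    by_contra h
    exact Set.disjoint_left.mp (hdisj (idx x) i h) (hidx x) hxi
  have hTTval : ∀ (i : ι) (s : S₀) (hsi : s ∈ (objs i).dom) (hs : s ∈ f.dom) (y : g.dom),
      TT ⟨s, hs⟩ y = eqToHom (hval i ⟨s, hsi⟩ hs) ≫ T i ⟨s, hsi⟩ y := by
    intro i s hsi hs y
    have hi : idx ⟨s, hs⟩ = i := hidx_eq i ⟨s, hs⟩ hsi
    subst hi
    rfl
  refine ⟨⟨TT, hTTfin⟩, ?_, ?_⟩
  · intro i
    funext x y
    have hx : (x : S₀) ∈ f.dom := by rw [hdom]; exact Set.mem_iUnion.mpr ⟨i, x.2⟩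
    rw [hcomp TT i x hx y, hTTval i (x : S₀) x.2 hx y]
    simp [eqToHom_trans_assoc]
  · rintro ⟨TT', hTT'fin⟩ hTT'
    ext x y
    show TT' x y = TT x y
    have h1 : T (idx x) ⟨(x : S₀), hidx x⟩ y
        = eqToHom ((hval (idx x) ⟨(x : S₀), hidx x⟩ x.2).symm) ≫ TT' x y := by
      rw [← hTT' (idx x)]
      exact hcomp TT' (idx x) ⟨(x : S₀), hidx x⟩ x.2 y
    calc TT' x y
        = eqToHom (hval (idx x) ⟨(x : S₀), hidx x⟩ x.2)
            ≫ eqToHom ((hval (idx x) ⟨(x : S₀), hidx x⟩ x.2).symm) ≫ TT' x y := by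
          simp
      _ = eqToHom (hval (idx x) ⟨(x : S₀), hidx x⟩ x.2)
            ≫ T (idx x) ⟨(x : S₀), hidx x⟩ y := by rw [← h1]
      _ = TT x y := rfl

end CS
end

section
/- For morphisms F : f → f', F' : f' → f'', G : g → g', G' : g' → g'' of 𝒞^{S₀}: (i) (F' ⊗ G') ∘ (F ⊗ G) = (F' ∘ F) ⊗ (G' ∘ G), and (ii) Id_f ⊗ Id_g = Id_{f⊗g}. In particular, the tensor product of morphisms again satisfies the finiteness condition, so ⊗ is a well-defined functor in each variable. -/
open CategoryTheory

open scoped Classical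
set_option linter.unusedSectionVars false
namespace CS

open MonoidalCategory

variable {S₀ : Type} {C : Type u} [Category.{v} C] [Preadditive C] [MonoidalCategory C]

lemma tobj_mem (γ : S₀ × S₀ ≃ S₀) (f g : CObj S₀ C)
    (z : ↑(γ '' (f.dom ×ˢ g.dom))) :
    (γ.symm ↑z).1 ∈ f.dom ∧ (γ.symm ↑z).2 ∈ g.dom := by
  obtain ⟨p, hp, hpz⟩ := z.2
  rw [← hpz, Equiv.symm_apply_apply]
  exact ⟨hp.1, hp.2⟩

/-- The tensor product of objects of `𝒞^{S₀}`:
`(f ⊗ g)(γ(x,y)) = f(x) ⊗ g(y)` on the domain `γ(S_f × S_g)`. -/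
def tobj (γ : S₀ × S₀ ≃ S₀) (f g : CObj S₀ C) : CObj S₀ C where
  dom := γ '' (f.dom ×ˢ g.dom)
  val := fun z =>
    f.val ⟨(γ.symm ↑z).1, (tobj_mem γ f g z).1⟩ ⊗ g.val ⟨(γ.symm ↑z).2, (tobj_mem γ f g z).2⟩

lemma tobj_val (γ : S₀ × S₀ ≃ S₀) (f g : CObj S₀ C) (z : (tobj γ f g).dom) :
    (tobj γ f g).val z =
      f.val ⟨(γ.symm ↑z).1, (tobj_mem γ f g z).1⟩ ⊗
        g.val ⟨(γ.symm ↑z).2, (tobj_mem γ f g z).2⟩ := rfl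

/-- The tensor product of morphisms of `𝒞^{S₀}`:
`(F ⊗ G)(γ(x,y), γ(x',y')) = F(x,x') ⊗ G(y,y')`. -/
def tmor (γ : S₀ × S₀ ≃ S₀) {f f' g g' : CObj S₀ C} (F : Mor f f') (G : Mor g g') :
    Mor (tobj γ f g) (tobj γ f' g') :=
  fun z z' =>
    F ⟨(γ.symm ↑z).1, (tobj_mem γ f g z).1⟩ ⟨(γ.symm ↑z').1, (tobj_mem γ f' g' z').1⟩ ⊗ₘ
      G ⟨(γ.symm ↑z).2, (tobj_mem γ f g z).2⟩ ⟨(γ.symm ↑z').2, (tobj_mem γ f' g' z').2⟩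

/-- The unit object `I : {∗} → Obj(𝒞)`, `∗ ↦ I`. -/
def iobj (pt : S₀) : CObj S₀ C := ⟨{pt}, fun _ => 𝟙_ C⟩

/-- The associativity constraint `A_{f,g,h}` given by Kronecker-delta identities. -/
noncomputable def massoc (hα : ∀ X Y Z : C, (X ⊗ Y) ⊗ Z = X ⊗ (Y ⊗ Z))
    (γ : S₀ × S₀ ≃ S₀) (f g h : CObj S₀ C) :
    Mor (tobj γ (tobj γ f g) h) (tobj γ f (tobj γ g h)) :=
  fun v w =>
    if hc : (γ.symm (γ.symm ↑v).1).1 = (γ.symm ↑w).1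
        ∧ (γ.symm (γ.symm ↑v).1).2 = (γ.symm (γ.symm ↑w).2).1
        ∧ (γ.symm ↑v).2 = (γ.symm (γ.symm ↑w).2).2 then
      eqToHom (by
        obtain ⟨h1, h2, h3⟩ := hc
        simp only [tobj_val]
        rw [hα]
        congr 1
        · exact congrArg f.val (Subtype.ext h1)
        congr 1
        · exact congrArg g.val (Subtype.ext h2)
        · exact congrArg h.val (Subtype.ext h3))
    else 0

/-- The inverse associativity constraint `A⁻¹_{f,g,h}`. -/
noncomputable def massocInv (hα : ∀ X Y Z : C, (X ⊗ Y) ⊗ Z = X ⊗ (Y ⊗ Z))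
    (γ : S₀ × S₀ ≃ S₀) (f g h : CObj S₀ C) :
    Mor (tobj γ f (tobj γ g h)) (tobj γ (tobj γ f g) h) :=
  fun w v =>
    if hc : (γ.symm ↑w).1 = (γ.symm (γ.symm ↑v).1).1
        ∧ (γ.symm (γ.symm ↑w).2).1 = (γ.symm (γ.symm ↑v).1).2
        ∧ (γ.symm (γ.symm ↑w).2).2 = (γ.symm ↑v).2 then
      eqToHom (by
        obtain ⟨h1, h2, h3⟩ := hc
        simp only [tobj_val]
        rw [hα]
        congr 1
        · exact congrArg f.val (Subtype.ext h1)
        congr 1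
        · exact congrArg g.val (Subtype.ext h2)
        · exact congrArg h.val (Subtype.ext h3))
    else 0

/-- The right unit `R_f : f ⊗ I → f`. -/
noncomputable def runit (hρ : ∀ X : C, X ⊗ 𝟙_ C = X) (γ : S₀ × S₀ ≃ S₀) (pt : S₀)
    (f : CObj S₀ C) : Mor (tobj γ f (iobj pt)) f :=
  fun z x' =>
    if hc : (γ.symm ↑z).1 = (x' : S₀) then
      eqToHom (by
        simp only [tobj_val]
        show f.val _ ⊗ 𝟙_ C = f.val x'
        rw [hρ]
        exact congrArg f.val (Subtype.ext hc))
    else 0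

/-- The inverse `R⁻¹_f : f → f ⊗ I`. -/
noncomputable def runitInv (hρ : ∀ X : C, X ⊗ 𝟙_ C = X) (γ : S₀ × S₀ ≃ S₀) (pt : S₀)
    (f : CObj S₀ C) : Mor f (tobj γ f (iobj pt)) :=
  fun x' z =>
    if hc : (x' : S₀) = (γ.symm ↑z).1 then
      eqToHom (by
        simp only [tobj_val]
        show f.val x' = f.val _ ⊗ 𝟙_ C
        rw [hρ]
        exact congrArg f.val (Subtype.ext hc))
    else 0

/-- The left unit `L_f : I ⊗ f → f`. -/
noncomputable def lunit (hl : ∀ X : C, 𝟙_ C ⊗ X = X) (γ : S₀ × S₀ ≃ S₀) (pt : S₀)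
    (f : CObj S₀ C) : Mor (tobj γ (iobj pt) f) f :=
  fun z x' =>
    if hc : (γ.symm ↑z).2 = (x' : S₀) then
      eqToHom (by
        simp only [tobj_val]
        show 𝟙_ C ⊗ f.val _ = f.val x'
        rw [hl]
        exact congrArg f.val (Subtype.ext hc))
    else 0

/-- The inverse `L⁻¹_f : f → I ⊗ f`. -/
noncomputable def lunitInv (hl : ∀ X : C, 𝟙_ C ⊗ X = X) (γ : S₀ × S₀ ≃ S₀) (pt : S₀)
    (f : CObj S₀ C) : Mor f (tobj γ (iobj pt) f) :=
  fun x' z =>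
    if hc : (x' : S₀) = (γ.symm ↑z).2 then
      eqToHom (by
        simp only [tobj_val]
        show f.val x' = 𝟙_ C ⊗ f.val _
        rw [hl]
        exact congrArg f.val (Subtype.ext hc))
    else 0

end CS
namespace CS

open MonoidalCategory

universe u' v'
variable {S₀ : Type} {C : Type u'} [Category.{v'} C] [Preadditive C] [MonoidalCategory C]

/-- The canonical equivalence `f.dom × g.dom ≃ (f ⊗ g).dom`. -/
def tEquiv (γ : S₀ × S₀ ≃ S₀) (f g : CObj S₀ C) :
    (f.dom × g.dom) ≃ (tobj γ f g).dom where
  toFun p := ⟨γ (↑p.1, ↑p.2), ⟨(↑p.1, ↑p.2), ⟨p.1.2, p.2.2⟩, rfl⟩⟩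
  invFun z := (⟨(γ.symm ↑z).1, (tobj_mem γ f g z).1⟩, ⟨(γ.symm ↑z).2, (tobj_mem γ f g z).2⟩)
  left_inv p := by ext <;> simp
  right_inv z := by
    apply Subtype.ext
    simp

lemma tmor_eq (γ : S₀ × S₀ ≃ S₀) {f f' g g' : CObj S₀ C} (F : Mor f f') (G : Mor g g')
    (z : (tobj γ f g).dom) (z' : (tobj γ f' g').dom) :
    tmor γ F G z z' =
      F ((tEquiv γ f g).symm z).1 ((tEquiv γ f' g').symm z').1 ⊗ₘ
        G ((tEquiv γ f g).symm z).2 ((tEquiv γ f' g').symm z').2 := rfl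

lemma supp_finite {f g : CObj S₀ C} (F : Mor f g) (hF : FinCond F) (x : f.dom) :
    {y : g.dom | F x y ≠ 0}.Finite := by
  by_cases h : g.dom.Infinite
  · exact hF h x
  · rw [Set.not_infinite] at h
    have := h.to_subtype
    exact Set.toFinite _

lemma finsum_tensor [MonoidalPreadditive C] {α β : Type*} {X Y X' Y' : C}
    (u : α → (X ⟶ X')) (v : β → (Y ⟶ Y'))
    (hu : (Function.support u).Finite) (hv : (Function.support v).Finite) :
    ∑ᶠ p : α × β, u p.1 ⊗ₘ v p.2 = (∑ᶠ x, u x) ⊗ₘ ∑ᶠ y, v y := by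
  rw [finsum_eq_sum_of_support_subset u (s := hu.toFinset) (by simp),
      finsum_eq_sum_of_support_subset v (s := hv.toFinset) (by simp),
      finsum_eq_sum_of_support_subset (f := fun p : α × β => u p.1 ⊗ₘ v p.2)
        (s := hu.toFinset ×ˢ hv.toFinset)]
  · rw [Finset.sum_product, sum_tensor]
    refine Finset.sum_congr rfl fun x _ => ?_
    rw [tensor_sum]
  · intro p hp
    simp only [Finset.coe_product, Set.mem_prod, Finset.mem_coe, Set.Finite.mem_toFinset,
      Function.mem_support]
    constructor
    · intro h; apply hp; simp only [Function.mem_support] at hp ⊢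
      rw [h, MonoidalPreadditive.zero_tensor]
    · intro h; apply hp; simp only [Function.mem_support] at hp ⊢
      rw [h, MonoidalPreadditive.tensor_zero]

/-- functoriality of the tensor product of morphisms in `𝒞^{S₀}`. -/
theorem stmt3 {S₀ : Type} {C : Type u} [Category.{v} C] [Preadditive C]
    [MonoidalCategory C] [MonoidalPreadditive C] (hS₀ : Infinite S₀)
    (γ : S₀ × S₀ ≃ S₀) :
    -- (i) `(F' ⊗ G') ∘ (F ⊗ G) = (F' ∘ F) ⊗ (G' ∘ G)`
    (∀ (f f' f'' g g' g'' : CObj S₀ C) (F : Mor f f') (F' : Mor f' f'')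
        (G : Mor g g') (G' : Mor g' g''),
        FinCond F → FinCond F' → FinCond G → FinCond G' →
        mcomp (tmor γ F' G') (tmor γ F G) = tmor γ (mcomp F' F) (mcomp G' G))
    -- (ii) `Id_f ⊗ Id_g = Id_{f ⊗ g}`
    ∧ (∀ f g : CObj S₀ C, tmor γ (mid f) (mid g) = mid (tobj γ f g))
    -- the tensor product of morphisms again satisfies the finiteness condition
    ∧ (∀ (f f' g g' : CObj S₀ C) (F : Mor f f') (G : Mor g g'),
        FinCond F → FinCond G → FinCond (tmor γ F G)) := by
  refine ⟨?_, ?_, ?_⟩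
  · -- (i)
    intro f f' f'' g g' g'' F F' G G' hF hF' hG hG'
    funext z z'
    have step1 : mcomp (tmor γ F' G') (tmor γ F G) z z'
        = ∑ᶠ p : f'.dom × g'.dom,
            (F ((tEquiv γ f g).symm z).1 p.1 ≫ F' p.1 ((tEquiv γ f'' g'').symm z').1) ⊗ₘ
              (G ((tEquiv γ f g).symm z).2 p.2 ≫ G' p.2 ((tEquiv γ f'' g'').symm z').2) := by
      calc mcomp (tmor γ F' G') (tmor γ F G) z z'
          = ∑ᶠ w : (tobj γ f' g').dom, tmor γ F G z w ≫ tmor γ F' G' w z' := rfl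
        _ = ∑ᶠ p : f'.dom × g'.dom,
              tmor γ F G z (tEquiv γ f' g' p) ≫ tmor γ F' G' (tEquiv γ f' g' p) z' :=
            (finsum_comp_equiv (tEquiv γ f' g')).symm
        _ = _ := by
            refine finsum_congr fun p => ?_
            set E := tEquiv γ f' g' with hE
            have hs : (E.symm (E p)).1 = p.1 := by rw [Equiv.symm_apply_apply]
            have ht : (E.symm (E p)).2 = p.2 := by rw [Equiv.symm_apply_apply]
            have h2 : (F ((tEquiv γ f g).symm z).1 (E.symm (E p)).1 ⊗ₘ
                      G ((tEquiv γ f g).symm z).2 (E.symm (E p)).2) ≫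
                    (F' (E.symm (E p)).1 ((tEquiv γ f'' g'').symm z').1 ⊗ₘ
                      G' (E.symm (E p)).2 ((tEquiv γ f'' g'').symm z').2) =
                  (F ((tEquiv γ f g).symm z).1 (E.symm (E p)).1 ≫
                      F' (E.symm (E p)).1 ((tEquiv γ f'' g'').symm z').1) ⊗ₘ
                    (G ((tEquiv γ f g).symm z).2 (E.symm (E p)).2 ≫
                      G' (E.symm (E p)).2 ((tEquiv γ f'' g'').symm z').2) :=
                  MonoidalCategory.tensorHom_comp_tensorHom _ _ _ _
            exact h2.trans (by rw [hs, ht])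
    have huf : (Function.support fun x : f'.dom =>
        F ((tEquiv γ f g).symm z).1 x ≫ F' x ((tEquiv γ f'' g'').symm z').1).Finite := by
      refine (supp_finite F hF ((tEquiv γ f g).symm z).1).subset fun x hx => ?_
      exact fun h0 => hx (by simp [h0])
    have hug : (Function.support fun y : g'.dom =>
        G ((tEquiv γ f g).symm z).2 y ≫ G' y ((tEquiv γ f'' g'').symm z').2).Finite := by
      refine (supp_finite G hG ((tEquiv γ f g).symm z).2).subset fun y hy => ?_
      exact fun h0 => hy (by simp [h0])
    rw [step1, finsum_tensor _ _ huf hug, tmor_eq]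
    rfl
  · -- (ii)
    intro f g
    funext z z'
    by_cases h : (z : S₀) = (z' : S₀)
    · have hz : z = z' := Subtype.ext h
      subst hz
      simp [tmor, mid, MonoidalCategory.id_tensorHom_id, tobj_val]; rfl
    · have h1 : ¬((γ.symm (↑z : S₀)).1 = (γ.symm (↑z' : S₀)).1)
          ∨ ¬((γ.symm (↑z : S₀)).2 = (γ.symm (↑z' : S₀)).2) := by
        by_contra hc
        push_neg at hc
        apply h
        have : γ.symm (↑z : S₀) = γ.symm (↑z' : S₀) := Prod.ext hc.1 hc.2
        simpa using congrArg γ this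
      show (mid f _ _ ⊗ₘ mid g _ _) = mid (tobj γ f g) z z'
      rw [mid, mid, mid, dif_neg h]
      rcases h1 with h1 | h1
      · rw [dif_neg h1, MonoidalPreadditive.zero_tensor]; rfl
      · rw [dif_neg h1, MonoidalPreadditive.tensor_zero]; rfl
  · -- (iii)
    intro f f' g g' F G hF hG _ x
    have hFfin := supp_finite F hF ((tEquiv γ f g).symm x).1
    have hGfin := supp_finite G hG ((tEquiv γ f g).symm x).2
    have hsub : {y | tmor γ F G x y ≠ 0} ⊆
        (fun p : f'.dom × g'.dom => tEquiv γ f' g' p) ''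
          ({a | F ((tEquiv γ f g).symm x).1 a ≠ 0} ×ˢ
            {b | G ((tEquiv γ f g).symm x).2 b ≠ 0}) := by
      intro w hw
      refine ⟨(tEquiv γ f' g').symm w, ⟨?_, ?_⟩, Equiv.apply_symm_apply _ _⟩
      · intro h0
        exact hw (by rw [tmor_eq, h0, MonoidalPreadditive.zero_tensor]; rfl)
      · intro h0
        exact hw (by rw [tmor_eq, h0, MonoidalPreadditive.tensor_zero]; rfl)
    exact ((hFfin.prod hGfin).image _).subset hsub


end CS
end

section
/- The associativity constraint A, the left unit L and the right unit R of 𝒞^{S₀} satisfy the Triangle Axiom: for all objects f, g, (Id_f ⊗ L_g) ∘ A_{f,I,g} = R_f ⊗ Id_g. -/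
open CategoryTheory

open scoped Classical
set_option linter.unusedSectionVars false
namespace CS

open MonoidalCategory

lemma eqToHom_tensor' {C : Type u} [Category.{v} C] [MonoidalCategory C]
    {X X' Y Y' : C} (h1 : X = X') (h2 : Y = Y') :
    eqToHom h1 ⊗ₘ eqToHom h2 = eqToHom (by rw [h1, h2]) := by
  subst h1; subst h2
  simp only [eqToHom_refl, MonoidalCategory.id_tensorHom_id]

/-- the Triangle Axiom `(Id_f ⊗ L_g) ∘ A_{f,I,g} = R_f ⊗ Id_g` in `𝒞^{S₀}`. -/
theorem stmt6 {S₀ : Type} {C : Type u} [Category.{v} C] [Preadditive C]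
    [MonoidalCategory C] [MonoidalPreadditive C] (hS₀ : Infinite S₀)
    (γ : S₀ × S₀ ≃ S₀) (pt : S₀)
    (hα : ∀ X Y Z : C, (X ⊗ Y) ⊗ Z = X ⊗ (Y ⊗ Z))
    (hρ : ∀ X : C, X ⊗ 𝟙_ C = X) (hl : ∀ X : C, 𝟙_ C ⊗ X = X) :
    ∀ f g : CObj S₀ C,
      mcomp (tmor γ (mid f) (lunit hl γ pt g)) (massoc hα γ f (iobj pt) g) =
        tmor γ (runit hρ γ pt f) (mid g) := by
  intro f g
  funext v w
  obtain ⟨hm1, hm2⟩ := tobj_mem γ (tobj γ f (iobj pt)) g v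
  obtain ⟨hm3, hm4⟩ := tobj_mem γ f (iobj pt) ⟨(γ.symm ↑v).1, hm1⟩
  set x := (γ.symm (γ.symm (v : S₀)).1).1 with hxdef
  set p := (γ.symm (γ.symm (v : S₀)).1).2 with hpdef
  set b := (γ.symm (v : S₀)).2 with hbdef
  have hz0mem : γ (x, γ (p, b)) ∈ (tobj γ f (tobj γ (iobj pt) g)).dom :=
    ⟨(x, γ (p, b)), ⟨hm3, ⟨(p, b), ⟨hm4, hm2⟩, rfl⟩⟩, rfl⟩
  set z₀ : ((tobj γ f (tobj γ (iobj pt) g)).dom : Set S₀) := ⟨γ (x, γ (p, b)), hz0mem⟩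
    with hz0def
  have hsymm : γ.symm (z₀ : S₀) = (x, γ (p, b)) := γ.symm_apply_apply _
  have hsymm2 : γ.symm (γ.symm (z₀ : S₀)).2 = (p, b) := by
    rw [hsymm]; exact γ.symm_apply_apply _
  show mcomp _ _ v w = _
  rw [mcomp]
  rw [finsum_eq_single _ z₀ ?side]
  case side =>
    intro z hz
    rw [massoc]
    split
    · next hc =>
      exfalso
      apply hz
      apply Subtype.ext
      have h2 : (γ.symm (z : S₀)).2 = γ (p, b) := by
        have : γ.symm ((γ.symm (z : S₀)).2) = (p, b) := by
          apply Prod.ext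
          · exact hc.2.1.symm
          · exact hc.2.2.symm
        calc (γ.symm (z : S₀)).2 = γ (γ.symm ((γ.symm (z : S₀)).2)) :=
              (γ.apply_symm_apply _).symm
          _ = γ (p, b) := by rw [this]
      calc (z : S₀) = γ (γ.symm (z : S₀)) := (γ.apply_symm_apply _).symm
        _ = γ (x, γ (p, b)) := congrArg γ (Prod.ext hc.1.symm h2)
    · simp
  -- main term
  have hcz : x = (γ.symm (z₀ : S₀)).1 ∧ p = (γ.symm (γ.symm (z₀ : S₀)).2).1
      ∧ b = (γ.symm (γ.symm (z₀ : S₀)).2).2 := by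
    refine ⟨?_, ?_, ?_⟩ <;> simp [hsymm, hsymm2]
  rw [massoc, dif_pos hcz, tmor, tmor, mid, mid, lunit, runit]
  simp only [hsymm, hsymm2, Equiv.symm_apply_apply]
  split_ifs with h1 h2 h3 <;>
    first
      | (simp only [eqToHom_tensor', eqToHom_tensor']; exact eqToHom_trans _ _)
      | (simp only [MonoidalPreadditive.tensor_zero, MonoidalPreadditive.tensor_zero]
          ; exact Limits.comp_zero)
      | (simp only [MonoidalPreadditive.zero_tensor, MonoidalPreadditive.zero_tensor]
          ; exact Limits.comp_zero)

end CS
end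

section
/- Choose for each object V of 𝒞 a point x_V ∈ S₀ (with x_I = ∗) and set J(V) = f_V, where f_V : {x_V} → Obj(𝒞) sends x_V to V; for a morphism α : V → W set J(α) = F_α with F_α(x_V, x_W) = α. Then J : 𝒞 → 𝒞^{S₀}, together with φ₀ = id and the isomorphisms φ₂(U,V) : J(U) ⊗ J(V) → J(U ⊗ V) given by φ₂(U,V)(γ(x_U,x_V), x_{U⊗V}) = id_{U⊗V}, is a fully faithful tensor functor (compatible with the associativity constraint and the left and right units); consequently 𝒞^{S₀} has a full subcategory tensor equivalent to 𝒞. -/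
open CategoryTheory

open scoped Classical
set_option linter.unusedSectionVars false
namespace CS

open MonoidalCategory

variable {S₀ : Type} {C : Type u} [Category.{v} C] [Preadditive C] [MonoidalCategory C]

/-- The inclusion functor `J : 𝒞 → 𝒞^{S₀}` on objects: `J(V) : {x_V} → Obj(𝒞)`, `x_V ↦ V`. -/
def jobj (xc : C → S₀) (V : C) : CObj S₀ C := ⟨{xc V}, fun _ => V⟩

/-- The inclusion functor on morphisms: `J(α)(x_V, x_W) = α`. -/
def jmor (xc : C → S₀) {V W : C} (α : V ⟶ W) : Mor (jobj xc V) (jobj xc W) :=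
  fun _ _ => α

/-- The structural isomorphism `φ₂(U,V) : J(U) ⊗ J(V) → J(U ⊗ V)`. -/
def jphi2 (xc : C → S₀) (γ : S₀ × S₀ ≃ S₀) (U V : C) :
    Mor (tobj γ (jobj xc U) (jobj xc V)) (jobj xc (U ⊗ V)) :=
  fun _ _ => 𝟙 (U ⊗ V)

/-- The structural isomorphism `φ₀ : I → J(I)`. -/
def jphi0 (xc : C → S₀) (pt : S₀) : Mor (iobj pt) (jobj xc (𝟙_ C)) :=
  fun _ _ => 𝟙 (𝟙_ C)

/-! ### Auxiliary lemmas -/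

lemma mcomp_eq_of {f g h : CObj S₀ C} (G : Mor g h) (F : Mor f g)
    (z₀ : g.dom) (hz : ∀ z : g.dom, z = z₀) (x : f.dom) (y : h.dom) :
    mcomp G F x y = F x z₀ ≫ G z₀ y := by
  letI : Unique g.dom := { default := z₀, uniq := hz }
  exact finsum_unique (fun z : g.dom => F x z ≫ G z y)

/-- The canonical point of `(jobj xc V).dom`. -/
def pV (xc : C → S₀) (V : C) : ((jobj xc V : CObj S₀ C)).dom := ⟨xc V, rfl⟩

lemma pV_uniq (xc : C → S₀) (V : C) (z : ((jobj xc V : CObj S₀ C)).dom) :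
    z = pV xc V := Subtype.ext z.2

/-- The canonical point of `(iobj pt).dom`. -/
def iPt (pt : S₀) : ((iobj pt : CObj S₀ C)).dom := ⟨pt, rfl⟩

lemma iPt_uniq (pt : S₀) (z : ((iobj pt : CObj S₀ C)).dom) :
    z = iPt (C := C) pt := Subtype.ext z.2

/-- The canonical point of a tensor product domain. -/
def tpt (γ : S₀ × S₀ ≃ S₀) {f g : CObj S₀ C} (a : f.dom) (b : g.dom) :
    (tobj γ f g).dom := ⟨γ (↑a, ↑b), ⟨(↑a, ↑b), ⟨a.2, b.2⟩, rfl⟩⟩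

lemma tpt_uniq (γ : S₀ × S₀ ≃ S₀) {f g : CObj S₀ C} (a : f.dom) (b : g.dom)
    (ha : ∀ z : f.dom, z = a) (hb : ∀ z : g.dom, z = b) :
    ∀ z : (tobj γ f g).dom, z = tpt γ a b := by
  rintro ⟨z, hz⟩
  obtain ⟨p, hp, rfl⟩ := hz
  apply Subtype.ext
  show γ p = γ (↑a, ↑b)
  congr 1
  have h1 := congrArg Subtype.val (ha ⟨p.1, hp.1⟩)
  have h2 := congrArg Subtype.val (hb ⟨p.2, hp.2⟩)
  exact Prod.ext h1 h2

lemma mid_jobj (xc : C → S₀) (V : C) (x y : ((jobj xc V : CObj S₀ C)).dom) :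
    mid (jobj xc V) x y = 𝟙 V := by
  have h : (x : S₀) = (y : S₀) := x.2.trans y.2.symm
  simp only [mid]
  rw [dif_pos h]
  rfl

lemma mid_iobj (pt : S₀) (x y : ((iobj pt : CObj S₀ C)).dom) :
    mid (iobj pt) x y = 𝟙 (𝟙_ C) := by
  have h : (x : S₀) = (y : S₀) := x.2.trans y.2.symm
  simp only [mid]
  rw [dif_pos h]
  rfl

lemma mid_tj (γ : S₀ × S₀ ≃ S₀) (xc : C → S₀) (U V : C)
    (x y : (tobj γ (jobj xc U) (jobj xc V)).dom) :
    mid (tobj γ (jobj xc U) (jobj xc V)) x y = 𝟙 (U ⊗ V) := by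
  have h : (x : S₀) = (y : S₀) := by
    rw [tpt_uniq γ (pV xc U) (pV xc V) (pV_uniq xc U) (pV_uniq xc V) x,
        tpt_uniq γ (pV xc U) (pV xc V) (pV_uniq xc U) (pV_uniq xc V) y]
  simp only [mid]
  rw [dif_pos h]
  rfl

/-- `(J, φ₀, φ₂)` is a fully faithful tensor functor `𝒞 → 𝒞^{S₀}`,
so that `𝒞^{S₀}` has a full subcategory tensor equivalent to `𝒞`. -/
theorem stmt8 {S₀ : Type} {C : Type u} [Category.{v} C] [Preadditive C]
    [MonoidalCategory C] [MonoidalPreadditive C] (hS₀ : Infinite S₀)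
    (γ : S₀ × S₀ ≃ S₀) (pt : S₀)
    (hα : ∀ X Y Z : C, (X ⊗ Y) ⊗ Z = X ⊗ (Y ⊗ Z))
    (hρ : ∀ X : C, X ⊗ 𝟙_ C = X) (hl : ∀ X : C, 𝟙_ C ⊗ X = X)
    (xc : C → S₀) (hI : xc (𝟙_ C) = pt) :
    -- `J` is a functor
    (∀ V : C, jmor xc (𝟙 V) = mid (jobj xc V))
    ∧ (∀ (U V W : C) (α : U ⟶ V) (β : V ⟶ W),
        jmor xc (α ≫ β) = mcomp (jmor xc β) (jmor xc α))
    -- morphisms in the image satisfy the finiteness condition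
    ∧ (∀ (V W : C) (α : V ⟶ W), FinCond (jmor xc α))
    -- `J` is fully faithful
    ∧ (∀ (V W : C) (F : Mor (jobj xc V) (jobj xc W)), ∃! α : V ⟶ W, jmor xc α = F)
    -- `φ₀` is an isomorphism
    ∧ (∃ ψ : Mor (jobj xc (𝟙_ C)) (iobj pt),
        mcomp ψ (jphi0 xc pt) = mid (iobj pt) ∧
        mcomp (jphi0 xc pt) ψ = mid (jobj xc (𝟙_ C)))
    -- `φ₂(U,V)` is a natural isomorphism
    ∧ (∀ U V : C, ∃ ψ : Mor (jobj xc (U ⊗ V)) (tobj γ (jobj xc U) (jobj xc V)),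
        mcomp ψ (jphi2 xc γ U V) = mid (tobj γ (jobj xc U) (jobj xc V)) ∧
        mcomp (jphi2 xc γ U V) ψ = mid (jobj xc (U ⊗ V)))
    ∧ (∀ (U U' V V' : C) (α : U ⟶ U') (β : V ⟶ V'),
        mcomp (jmor xc (α ⊗ₘ β)) (jphi2 xc γ U V) =
          mcomp (jphi2 xc γ U' V') (tmor γ (jmor xc α) (jmor xc β)))
    -- compatibility with the associativity constraints
    ∧ (∀ U V W : C,
        mcomp (jmor xc (eqToHom (hα U V W)))
          (mcomp (jphi2 xc γ (U ⊗ V) W) (tmor γ (jphi2 xc γ U V) (mid (jobj xc W)))) =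
        mcomp (jphi2 xc γ U (V ⊗ W))
          (mcomp (tmor γ (mid (jobj xc U)) (jphi2 xc γ V W))
            (massoc hα γ (jobj xc U) (jobj xc V) (jobj xc W))))
    -- compatibility with the right units
    ∧ (∀ V : C,
        mcomp (jmor xc (eqToHom (hρ V)))
          (mcomp (jphi2 xc γ V (𝟙_ C)) (tmor γ (mid (jobj xc V)) (jphi0 xc pt))) =
        runit hρ γ pt (jobj xc V))
    -- compatibility with the left units
    ∧ (∀ V : C,
        mcomp (jmor xc (eqToHom (hl V)))
          (mcomp (jphi2 xc γ (𝟙_ C) V) (tmor γ (jphi0 xc pt) (mid (jobj xc V)))) =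
        lunit hl γ pt (jobj xc V)) := by
  refine ⟨?_, ?_, ?_, ?_, ?_, ?_, ?_, ?_, ?_, ?_⟩
  · -- identities
    intro V
    funext x y
    rw [mid_jobj]
    rfl
  · -- composition
    intro U V W α β
    funext x y
    rw [mcomp_eq_of _ _ (pV xc V) (pV_uniq xc V)]
    rfl
  · -- finiteness condition
    intro V W α _ x
    have : Subsingleton ((jobj xc W : CObj S₀ C)).dom :=
      ⟨fun a b => (pV_uniq xc W a).trans (pV_uniq xc W b).symm⟩
    exact Set.toFinite _
  · -- fully faithful
    intro V W F
    refine ⟨F (pV xc V) (pV xc W), ?_, ?_⟩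
    · funext x y
      rw [pV_uniq xc V x, pV_uniq xc W y]
      rfl
    · intro α hα'
      rw [← hα']
      rfl
  · -- φ₀ is an isomorphism
    refine ⟨fun _ _ => 𝟙 (𝟙_ C), ?_, ?_⟩
    · funext x y
      erw [mcomp_eq_of _ _ (pV xc (𝟙_ C)) (pV_uniq xc (𝟙_ C)), mid_iobj]
      exact Category.comp_id _
    · funext x y
      erw [mcomp_eq_of _ _ (iPt pt) (iPt_uniq pt), mid_jobj]
      exact Category.comp_id _
  · -- φ₂ is an isomorphism
    intro U V
    refine ⟨fun _ _ => 𝟙 (U ⊗ V), ?_, ?_⟩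
    · funext x y
      erw [mcomp_eq_of _ _ (pV xc (U ⊗ V)) (pV_uniq xc (U ⊗ V)), mid_tj]
      exact Category.comp_id _
    · funext x y
      erw [mcomp_eq_of _ _ (tpt γ (pV xc U) (pV xc V))
            (tpt_uniq γ _ _ (pV_uniq xc U) (pV_uniq xc V)), mid_jobj]
      exact Category.comp_id _
  · -- naturality of φ₂
    intro U U' V V' α β
    funext x y
    rw [mcomp_eq_of _ _ (pV xc (U ⊗ V)) (pV_uniq xc (U ⊗ V)),
        mcomp_eq_of _ _ (tpt γ (pV xc U') (pV xc V'))
          (tpt_uniq γ _ _ (pV_uniq xc U') (pV_uniq xc V'))]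
    exact (Category.id_comp _).trans (Category.comp_id _).symm
  · -- associativity
    intro U V W
    funext x y
    rw [mcomp_eq_of _ _ (pV xc ((U ⊗ V) ⊗ W)) (pV_uniq xc ((U ⊗ V) ⊗ W)),
        mcomp_eq_of _ _ (tpt γ (pV xc (U ⊗ V)) (pV xc W))
          (tpt_uniq γ _ _ (pV_uniq xc (U ⊗ V)) (pV_uniq xc W)),
        mcomp_eq_of _ _ (tpt γ (pV xc U) (pV xc (V ⊗ W)))
          (tpt_uniq γ _ _ (pV_uniq xc U) (pV_uniq xc (V ⊗ W))),
        mcomp_eq_of _ _ (tpt γ (pV xc U) (tpt γ (pV xc V) (pV xc W)))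
          (tpt_uniq γ _ _ (pV_uniq xc U)
            (tpt_uniq γ _ _ (pV_uniq xc V) (pV_uniq xc W)))]
    simp only [tmor, jphi2, jmor]
    rw [mid_jobj, mid_jobj]
    -- evaluate massoc
    have h1 : (γ.symm (γ.symm (x : S₀)).1).1
        = (γ.symm ((tpt γ (pV xc U) (tpt γ (pV xc V) (pV xc W)) :
            (tobj γ (jobj xc U) (tobj γ (jobj xc V) (jobj xc W))).dom) : S₀)).1 := by
      have ha := (tobj_mem γ (jobj xc U) (jobj xc V)
        ⟨(γ.symm (x : S₀)).1,
          (tobj_mem γ (tobj γ (jobj xc U) (jobj xc V)) (jobj xc W) x).1⟩).1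
      simp only [tpt, pV, Equiv.symm_apply_apply]
      exact ha
    have h2 : (γ.symm (γ.symm (x : S₀)).1).2
        = (γ.symm (γ.symm ((tpt γ (pV xc U) (tpt γ (pV xc V) (pV xc W)) :
            (tobj γ (jobj xc U) (tobj γ (jobj xc V) (jobj xc W))).dom) : S₀)).2).1 := by
      have ha := (tobj_mem γ (jobj xc U) (jobj xc V)
        ⟨(γ.symm (x : S₀)).1,
          (tobj_mem γ (tobj γ (jobj xc U) (jobj xc V)) (jobj xc W) x).1⟩).2
      simp only [tpt, pV, Equiv.symm_apply_apply]
      exact ha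
    have h3 : (γ.symm (x : S₀)).2
        = (γ.symm (γ.symm ((tpt γ (pV xc U) (tpt γ (pV xc V) (pV xc W)) :
            (tobj γ (jobj xc U) (tobj γ (jobj xc V) (jobj xc W))).dom) : S₀)).2).2 := by
      have ha := (tobj_mem γ (tobj γ (jobj xc U) (jobj xc V)) (jobj xc W) x).2
      simp only [tpt, pV, Equiv.symm_apply_apply]
      exact ha
    simp only [massoc]
    rw [dif_pos ⟨h1, h2, h3⟩]
    show ((𝟙 (U ⊗ V) ⊗ₘ 𝟙 W) ≫ 𝟙 ((U ⊗ V) ⊗ W)) ≫ eqToHom (hα U V W)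
        = (eqToHom (hα U V W) ≫ (𝟙 U ⊗ₘ 𝟙 (V ⊗ W))) ≫ 𝟙 (U ⊗ (V ⊗ W))
    simp
  · -- right unit
    intro V
    funext x y
    rw [mcomp_eq_of _ _ (pV xc (V ⊗ 𝟙_ C)) (pV_uniq xc (V ⊗ 𝟙_ C)),
        mcomp_eq_of _ _ (tpt γ (pV xc V) (pV xc (𝟙_ C)))
          (tpt_uniq γ _ _ (pV_uniq xc V) (pV_uniq xc (𝟙_ C)))]
    simp only [tmor, jphi2, jmor, jphi0]
    rw [mid_jobj]
    have hc : (γ.symm (x : S₀)).1 = (y : S₀) :=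
      ((tobj_mem γ (jobj xc V) (iobj pt) x).1).trans y.2.symm
    simp only [runit]
    rw [dif_pos hc]
    show ((𝟙 V ⊗ₘ 𝟙 (𝟙_ C)) ≫ 𝟙 (V ⊗ 𝟙_ C)) ≫ eqToHom (hρ V) = eqToHom (hρ V)
    simp
  · -- left unit
    intro V
    funext x y
    rw [mcomp_eq_of _ _ (pV xc (𝟙_ C ⊗ V)) (pV_uniq xc (𝟙_ C ⊗ V)),
        mcomp_eq_of _ _ (tpt γ (pV xc (𝟙_ C)) (pV xc V))
          (tpt_uniq γ _ _ (pV_uniq xc (𝟙_ C)) (pV_uniq xc V))]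
    simp only [tmor, jphi2, jmor, jphi0]
    rw [mid_jobj]
    have hc : (γ.symm (x : S₀)).2 = (y : S₀) :=
      ((tobj_mem γ (iobj pt) (jobj xc V) x).2).trans y.2.symm
    simp only [lunit]
    rw [dif_pos hc]
    show ((𝟙 (𝟙_ C) ⊗ₘ 𝟙 V) ≫ 𝟙 (𝟙_ C ⊗ V)) ≫ eqToHom (hl V) = eqToHom (hl V)
    simp

end CS
end

section
/- Suppose 𝒞 is braided with braiding c and has a twist θ (a natural family of isomorphisms θ_V : V → V compatible with the braiding: θ_{V⊗W} = c_{W,V} ∘ c_{V,W} ∘ (θ_V ⊗ θ_W)). Then the family Θ_f : f → f, Θ_f(x,y) = δ_{x,y} θ_{f(x)}, is a twist for the braided monoidal category 𝒞^{S₀} with braiding C_{f,g}(γ(x,y), γ(y',x')) = δ_{x,x'} δ_{y,y'} c_{f(x),g(y)}: each Θ_f is a natural isomorphism and Θ_{f⊗g} = C_{g,f} ∘ C_{f,g} ∘ (Θ_f ⊗ Θ_g). -/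
open CategoryTheory

open scoped Classical
set_option linter.unusedSectionVars false
namespace CS

open MonoidalCategory

variable {S₀ : Type} {C : Type u} [Category.{v} C] [Preadditive C] [MonoidalCategory C]

/-- The braiding `C_{f,g}(γ(x,y),γ(y',x')) = δ_{x,x'} δ_{y,y'} c_{f(x),g(y)}` of `𝒞^{S₀}`. -/
noncomputable def mbraid [BraidedCategory C] (γ : S₀ × S₀ ≃ S₀) (f g : CObj S₀ C) :
    Mor (tobj γ f g) (tobj γ g f) :=
  fun v w =>
    if hc : (γ.symm ↑v).1 = (γ.symm ↑w).2 ∧ (γ.symm ↑v).2 = (γ.symm ↑w).1 then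
      (β_ (f.val ⟨(γ.symm ↑v).1, (tobj_mem γ f g v).1⟩)
          (g.val ⟨(γ.symm ↑v).2, (tobj_mem γ f g v).2⟩)).hom ≫
        eqToHom (by
          simp only [tobj_val]
          congr 1
          · exact congrArg g.val (Subtype.ext hc.2)
          · exact congrArg f.val (Subtype.ext hc.1))
    else 0

/-- The inverse braiding `C⁻¹_{f,g}`. -/
noncomputable def mbraidInv [BraidedCategory C] (γ : S₀ × S₀ ≃ S₀) (f g : CObj S₀ C) :
    Mor (tobj γ g f) (tobj γ f g) :=
  fun w v =>
    if hc : (γ.symm ↑w).1 = (γ.symm ↑v).2 ∧ (γ.symm ↑w).2 = (γ.symm ↑v).1 then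
      (β_ (f.val ⟨(γ.symm ↑w).2, (tobj_mem γ g f w).2⟩)
          (g.val ⟨(γ.symm ↑w).1, (tobj_mem γ g f w).1⟩)).inv ≫
        eqToHom (by
          simp only [tobj_val]
          congr 1
          · exact congrArg f.val (Subtype.ext hc.2)
          · exact congrArg g.val (Subtype.ext hc.1))
    else 0

/-- The twist `Θ_f(x,y) = δ_{x,y} θ_{f(x)}` of `𝒞^{S₀}`, extending a twist `θ` of `𝒞`. -/
noncomputable def mtwist (θ : ∀ X : C, X ⟶ X) (f : CObj S₀ C) : Mor f f :=
  fun x y =>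
    if h : (x : S₀) = (y : S₀) then
      θ (f.val x) ≫ eqToHom (congrArg f.val (Subtype.ext h))
    else 0

/-- The class `𝒜` of isomorphisms of `𝒞^{S₀}` generated by the identities and the
constraints `A^{±1}`, `R^{±1}`, `L^{±1}` under tensor product and composition. -/
inductive MStruct (hα : ∀ X Y Z : C, (X ⊗ Y) ⊗ Z = X ⊗ (Y ⊗ Z))
    (hl : ∀ X : C, 𝟙_ C ⊗ X = X) (hρ : ∀ X : C, X ⊗ 𝟙_ C = X)
    (γ : S₀ × S₀ ≃ S₀) (pt : S₀) :
    ∀ {f g : CObj S₀ C}, Mor f g → Prop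
  | id (f : CObj S₀ C) : MStruct hα hl hρ γ pt (mid f)
  | assoc (f g h : CObj S₀ C) : MStruct hα hl hρ γ pt (massoc hα γ f g h)
  | assocInv (f g h : CObj S₀ C) : MStruct hα hl hρ γ pt (massocInv hα γ f g h)
  | runit (f : CObj S₀ C) : MStruct hα hl hρ γ pt (runit hρ γ pt f)
  | runitInv (f : CObj S₀ C) : MStruct hα hl hρ γ pt (runitInv hρ γ pt f)
  | lunit (f : CObj S₀ C) : MStruct hα hl hρ γ pt (lunit hl γ pt f)
  | lunitInv (f : CObj S₀ C) : MStruct hα hl hρ γ pt (lunitInv hl γ pt f)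
  | comp {f g h : CObj S₀ C} {F : Mor f g} {G : Mor g h} :
      MStruct hα hl hρ γ pt F → MStruct hα hl hρ γ pt G → MStruct hα hl hρ γ pt (mcomp G F)
  | tensor {f f' g g' : CObj S₀ C} {F : Mor f f'} {G : Mor g g'} :
      MStruct hα hl hρ γ pt F → MStruct hα hl hρ γ pt G → MStruct hα hl hρ γ pt (tmor γ F G)

/-- `F ≐ G`: equality of morphisms of `𝒞^{S₀}` up to composition with isomorphisms
built from the associativity and unit constraints. -/
noncomputable def Doteq (hα : ∀ X Y Z : C, (X ⊗ Y) ⊗ Z = X ⊗ (Y ⊗ Z))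
    (hl : ∀ X : C, 𝟙_ C ⊗ X = X) (hρ : ∀ X : C, X ⊗ 𝟙_ C = X)
    (γ : S₀ × S₀ ≃ S₀) (pt : S₀) {f g f' g' : CObj S₀ C}
    (F : Mor f g) (G : Mor f' g') : Prop :=
  ∃ (X : Mor g g') (Y : Mor f' f), MStruct hα hl hρ γ pt X ∧ MStruct hα hl hρ γ pt Y ∧
    G = mcomp X (mcomp F Y)

end CS
namespace CS

open MonoidalCategory

lemma braid_eqToHom {C : Type u} [Category.{v} C] [MonoidalCategory C] [BraidedCategory C]
    {X X' Y Y' : C} (hX : X = X') (hY : Y = Y') (h1 : X ⊗ Y = X' ⊗ Y') :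
    eqToHom h1 ≫ (β_ X' Y').hom = (β_ X Y).hom ≫ eqToHom (by rw [hX, hY]) := by
  subst hX; subst hY; simp

/-- a twist `θ` of `𝒞` extends to a twist `Θ_f(x,y) = δ_{x,y} θ_{f(x)}`
of the braided monoidal category `𝒞^{S₀}`. -/
theorem stmt10 {S₀ : Type} {C : Type u} [Category.{v} C] [Preadditive C]
    [MonoidalCategory C] [MonoidalPreadditive C] [BraidedCategory C]
    (hS₀ : Infinite S₀) (γ : S₀ × S₀ ≃ S₀)
    (θ : ∀ X : C, X ⟶ X) (hiso : ∀ X : C, IsIso (θ X))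
    (hnat : ∀ (X Y : C) (α : X ⟶ Y), α ≫ θ Y = θ X ≫ α)
    (htw : ∀ X Y : C, θ (X ⊗ Y) = (θ X ⊗ₘ θ Y) ≫ (β_ X Y).hom ≫ (β_ Y X).hom) :
    -- each `Θ_f` is an isomorphism
    (∀ f : CObj S₀ C, ∃ Ψ : Mor f f,
      mcomp Ψ (mtwist θ f) = mid f ∧ mcomp (mtwist θ f) Ψ = mid f)
    -- `Θ` is natural
    ∧ (∀ (f g : CObj S₀ C) (F : Mor f g), FinCond F →
        mcomp F (mtwist θ f) = mcomp (mtwist θ g) F)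
    -- compatibility with the braiding: `Θ_{f⊗g} = C_{g,f} ∘ C_{f,g} ∘ (Θ_f ⊗ Θ_g)`
    ∧ (∀ f g : CObj S₀ C,
        mtwist θ (tobj γ f g) =
          mcomp (mbraid γ g f) (mcomp (mbraid γ f g) (tmor γ (mtwist θ f) (mtwist θ g)))) := by
  refine ⟨?_, ?_, ?_⟩
  · -- part 1: Θ_f is an isomorphism
    intro f
    refine ⟨fun x y => if h : (x : S₀) = (y : S₀) then
        (@CategoryTheory.inv _ _ _ _ (θ (f.val x)) (hiso _)) ≫
          eqToHom (congrArg f.val (Subtype.ext h)) else 0, ?_, ?_⟩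
    · funext x y
      show (∑ᶠ z : f.dom, mtwist θ f x z ≫ _) = mid f x y
      rw [finsum_eq_single _ x (fun z hz => by
        have h : ¬ ((x : S₀) = (z : S₀)) := fun h => hz (Subtype.ext h.symm)
        simp [mtwist, h])]
      letI := hiso (f.val x)
      by_cases h : (x : S₀) = (y : S₀)
      · have hxy : x = y := Subtype.ext h
        subst hxy
        simp [mtwist, mid]
      · simp [mtwist, mid, h]
    · funext x y
      show (∑ᶠ z : f.dom, _ ≫ mtwist θ f z y) = mid f x y
      rw [finsum_eq_single _ x (fun z hz => by
        have h : ¬ ((x : S₀) = (z : S₀)) := fun h => hz (Subtype.ext h.symm)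
        simp [h])]
      letI := hiso (f.val x)
      by_cases h : (x : S₀) = (y : S₀)
      · have hxy : x = y := Subtype.ext h
        subst hxy
        simp [mtwist, mid]
      · simp [mtwist, mid, h]
  · -- part 2: naturality
    intro f g F _
    funext x y
    show (∑ᶠ z : f.dom, mtwist θ f x z ≫ F z y) = ∑ᶠ z : g.dom, F x z ≫ mtwist θ g z y
    rw [finsum_eq_single _ x (fun z hz => by
        have h : ¬ ((x : S₀) = (z : S₀)) := fun h => hz (Subtype.ext h.symm)
        simp [mtwist, h]),
      finsum_eq_single _ y (fun z hz => by
        have h : ¬ ((z : S₀) = (y : S₀)) := fun h => hz (Subtype.ext h)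
        simp [mtwist, h])]
    simp only [mtwist, dif_pos rfl, eqToHom_refl, Category.comp_id]
    exact (hnat _ _ (F x y)).symm
  · -- part 3: compatibility with the braiding
    intro f g
    funext v w
    have hz₀mem : γ ((γ.symm ↑v).2, (γ.symm ↑v).1) ∈ (tobj γ g f).dom :=
      ⟨((γ.symm ↑v).2, (γ.symm ↑v).1), ⟨(tobj_mem γ f g v).2, (tobj_mem γ f g v).1⟩, rfl⟩
    set z₀ : ↥(tobj γ g f).dom := ⟨γ ((γ.symm ↑v).2, (γ.symm ↑v).1), hz₀mem⟩ with hz₀def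
    have hz₀ : γ.symm (z₀ : S₀) = ((γ.symm ↑v).2, (γ.symm ↑v).1) := Equiv.symm_apply_apply _ _
    -- the tensor of the twists vanishes off the diagonal
    have hT : ∀ z : ↥(tobj γ f g).dom, z ≠ v →
        tmor γ (mtwist θ f) (mtwist θ g) v z = 0 := by
      intro z hz
      have h1 : ¬ ((γ.symm ↑v).1 = (γ.symm ↑z).1) ∨ ¬ ((γ.symm ↑v).2 = (γ.symm ↑z).2) := by
        by_contra hc
        push_neg at hc
        exact hz (Subtype.ext (γ.symm.injective (Prod.ext hc.1 hc.2))).symm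
      rcases h1 with h1 | h1 <;>
        simp [tmor, mtwist, h1, MonoidalPreadditive.zero_tensor,
          MonoidalPreadditive.tensor_zero] <;> rfl
    have hinner : ∀ z' : ↥(tobj γ g f).dom,
        mcomp (mbraid γ f g) (tmor γ (mtwist θ f) (mtwist θ g)) v z'
          = tmor γ (mtwist θ f) (mtwist θ g) v v ≫ mbraid γ f g v z' :=
      fun z' => finsum_eq_single _ v (fun z hz => by rw [hT z hz, Limits.zero_comp])
    have houter : mcomp (mbraid γ g f)
        (mcomp (mbraid γ f g) (tmor γ (mtwist θ f) (mtwist θ g))) v w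
        = (tmor γ (mtwist θ f) (mtwist θ g) v v ≫ mbraid γ f g v z₀) ≫ mbraid γ g f z₀ w := by
      show (∑ᶠ z' : ↥(tobj γ g f).dom, _ ≫ mbraid γ g f z' w) = _
      rw [finsum_eq_single _ z₀ (fun z' hz' => by
        rw [hinner]
        have hc : ¬ ((γ.symm ↑v).1 = (γ.symm ↑z').2 ∧ (γ.symm ↑v).2 = (γ.symm ↑z').1) := by
          intro hc
          apply hz'
          apply Subtype.ext
          have h2 : γ.symm ↑z' = ((γ.symm ↑v).2, (γ.symm ↑v).1) :=
            Prod.ext hc.2.symm hc.1.symm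
          have := congrArg γ h2
          rw [Equiv.apply_symm_apply] at this
          exact this
        have : mbraid γ f g v z' = 0 := by simp [mbraid, hc]
        rw [this, Limits.comp_zero, Limits.zero_comp]), hinner]
    rw [houter]
    by_cases hvw : (v : S₀) = (w : S₀)
    · have hwv : w = v := Subtype.ext hvw.symm
      subst hwv
      -- compute each factor
      have hTvv : tmor γ (mtwist θ f) (mtwist θ g) w w =
          θ (f.val ⟨(γ.symm ↑w).1, (tobj_mem γ f g w).1⟩) ⊗ₘ
            θ (g.val ⟨(γ.symm ↑w).2, (tobj_mem γ f g w).2⟩) := by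
        show (mtwist θ f _ _) ⊗ₘ (mtwist θ g _ _) = _
        simp [mtwist]
      have hc1 : (γ.symm ↑w).1 = (γ.symm ↑z₀).2 ∧ (γ.symm ↑w).2 = (γ.symm ↑z₀).1 := by
        rw [hz₀]; exact ⟨rfl, rfl⟩
      have hc2 : (γ.symm ↑z₀).1 = (γ.symm ↑w).2 ∧ (γ.symm ↑z₀).2 = (γ.symm ↑w).1 := by
        rw [hz₀]; exact ⟨rfl, rfl⟩
      rw [show mbraid γ f g w z₀ = _ from dif_pos hc1, show mbraid γ g f z₀ w = _ from dif_pos hc2]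
      rw [mtwist, dif_pos rfl, hTvv]
      simp only [tobj_val, eqToHom_refl, Category.comp_id]
      rw [htw]
      have ha : g.val ⟨(γ.symm ↑w).2, (tobj_mem γ f g w).2⟩
          = g.val ⟨(γ.symm ↑z₀).1, (tobj_mem γ g f z₀).1⟩ :=
        congrArg g.val (Subtype.ext hc1.2)
      have hb : f.val ⟨(γ.symm ↑w).1, (tobj_mem γ f g w).1⟩
          = f.val ⟨(γ.symm ↑z₀).2, (tobj_mem γ g f z₀).2⟩ :=
        congrArg f.val (Subtype.ext hc1.1)
      slice_rhs 3 4 => erw [braid_eqToHom ha hb]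
      simp [eqToHom_trans]
      exact (Category.comp_id _).symm.trans
        (congrArg (_ ≫ ·) ((eqToHom_trans _ _).trans (eqToHom_refl _ _)).symm)
    · have hLHS : mtwist θ (tobj γ f g) v w = 0 := by simp [mtwist, hvw]
      rw [hLHS]
      have hc' : ¬ ((γ.symm ↑v).2 = (γ.symm ↑w).2 ∧ (γ.symm ↑v).1 = (γ.symm ↑w).1) := by
        rintro ⟨h1, h2⟩
        apply hvw
        have h3 : γ.symm ↑v = γ.symm ↑w := Prod.ext h2 h1
        have := congrArg γ h3
        rwa [Equiv.apply_symm_apply, Equiv.apply_symm_apply] at this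
      have has : mbraid γ g f z₀ w = 0 := dif_neg (by rw [hz₀]; exact hc')
      rw [has, Limits.comp_zero]

end CS
end

section
/- For all objects x, y, z of 𝒱, the isomorphisms Γ satisfy Γ_{x, y⊗z} ∘ (Γ_{y,z} ⊗ id_{x*⊗x}) = Γ_{x⊗y, z} ∘ (id_{z*⊗z} ⊗ Γ_{x,y}) as morphisms z* ⊗ z ⊗ y* ⊗ y ⊗ x* ⊗ x → (x ⊗ y ⊗ z)* ⊗ (x ⊗ y ⊗ z) (where the duals (x⊗y)* and (y⊗z)* are identified with the corresponding iterated duals via the isomorphisms γ). -/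
set_option maxHeartbeats 40000000

open CategoryTheory MonoidalCategory

universe u v

variable {V : Type u} [Category.{v} V] [MonoidalCategory V] [BraidedCategory V]
  [RightRigidCategory V]

/-- The canonical isomorphism `γ_{x,y} : y* ⊗ x* → (x ⊗ y)*`. -/
noncomputable def gamIso (x y : V) : yᘁ ⊗ xᘁ ⟶ (x ⊗ y)ᘁ :=
  𝟙 (yᘁ ⊗ xᘁ) ⊗≫ ((yᘁ ⊗ xᘁ) ◁ η_ (x ⊗ y) ((x ⊗ y)ᘁ)) ⊗≫
    (yᘁ ◁ ((ε_ x xᘁ) ▷ (y ⊗ (x ⊗ y)ᘁ))) ⊗≫ ((ε_ y yᘁ) ▷ (x ⊗ y)ᘁ) ⊗≫ 𝟙 ((x ⊗ y)ᘁ)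

/-- The isomorphism `Γ_{x,y} : y* ⊗ y ⊗ x* ⊗ x → (x ⊗ y)* ⊗ (x ⊗ y)`. -/
noncomputable def GamIso (x y : V) : (yᘁ ⊗ y) ⊗ (xᘁ ⊗ x) ⟶ (x ⊗ y)ᘁ ⊗ (x ⊗ y) :=
  𝟙 ((yᘁ ⊗ y) ⊗ (xᘁ ⊗ x)) ⊗≫ (yᘁ ◁ ((β_ y xᘁ).hom ▷ x)) ⊗≫
    (gamIso x y ⊗ₘ (β_ y x).hom)

/-- The morphism `id_{x*} ⊗ b_x ⊗ id_x : x* ⊗ x → (x* ⊗ x) ⊗ (x* ⊗ x)`. -/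
noncomputable def DlMor (x : V) : xᘁ ⊗ x ⟶ (xᘁ ⊗ x) ⊗ (xᘁ ⊗ x) :=
  𝟙 (xᘁ ⊗ x) ⊗≫ (xᘁ ◁ ((η_ x xᘁ) ▷ x)) ⊗≫ 𝟙 ((xᘁ ⊗ x) ⊗ (xᘁ ⊗ x))

section Auxiliary

set_option linter.unusedSectionVars false

open BraidedCategory

/-- Morphisms into a right dual are determined by their pairing with the evaluation. -/
lemma hom_dual_ext {A X : V} [HasRightDual X] {f g : A ⟶ Xᘁ}
    (h : f ▷ X ≫ ε_ X Xᘁ = g ▷ X ≫ ε_ X Xᘁ) : f = g := by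
  have := congrArg (tensorRightHomEquiv A X (Xᘁ) (𝟙_ V)) h
  rw [tensorRightHomEquiv_whiskerRight_comp_evaluation,
    tensorRightHomEquiv_whiskerRight_comp_evaluation] at this
  exact (cancel_mono (λ_ (Xᘁ)).inv).1 this

/-- Pairing `gamIso x y` with the evaluation of `x ⊗ y` gives the iterated evaluation. -/
lemma gam_eval (x y : V) :
    gamIso x y ▷ (x ⊗ y) ≫ ε_ (x ⊗ y) ((x ⊗ y)ᘁ) =
      𝟙 ((yᘁ ⊗ xᘁ) ⊗ (x ⊗ y)) ⊗≫ yᘁ ◁ ε_ x xᘁ ▷ y ⊗≫ ε_ y yᘁ := by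
  calc
    _ = (𝟙 _ ⊗≫ ((yᘁ ⊗ xᘁ) ◁ η_ (x ⊗ y) ((x ⊗ y)ᘁ)) ▷ (x ⊗ y) ⊗≫
        (yᘁ ◁ ε_ x xᘁ ▷ (y ⊗ (x ⊗ y)ᘁ)) ▷ (x ⊗ y) ⊗≫
        (ε_ y yᘁ ▷ ((x ⊗ y)ᘁ ⊗ (x ⊗ y)) ≫ 𝟙_ V ◁ ε_ (x ⊗ y) ((x ⊗ y)ᘁ)) ⊗≫
        𝟙 (𝟙_ V) : (yᘁ ⊗ xᘁ) ⊗ (x ⊗ y) ⟶ 𝟙_ V) := by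
      dsimp only [gamIso]; monoidal
    _ = (𝟙 _ ⊗≫ ((yᘁ ⊗ xᘁ) ◁ η_ (x ⊗ y) ((x ⊗ y)ᘁ)) ▷ (x ⊗ y) ⊗≫
        ((yᘁ ◁ ε_ x xᘁ ▷ y) ▷ ((x ⊗ y)ᘁ ⊗ (x ⊗ y)) ≫
          (yᘁ ⊗ 𝟙_ V ⊗ y) ◁ ε_ (x ⊗ y) ((x ⊗ y)ᘁ)) ⊗≫ ε_ y yᘁ ⊗≫
        𝟙 (𝟙_ V) : (yᘁ ⊗ xᘁ) ⊗ (x ⊗ y) ⟶ 𝟙_ V) := by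
      rw [← whisker_exchange]; monoidal
    _ = (𝟙 _ ⊗≫ (yᘁ ⊗ xᘁ) ◁ (η_ (x ⊗ y) ((x ⊗ y)ᘁ) ▷ (x ⊗ y) ≫ (α_ _ _ _).hom ≫
          (x ⊗ y) ◁ ε_ (x ⊗ y) ((x ⊗ y)ᘁ)) ⊗≫ yᘁ ◁ ε_ x xᘁ ▷ y ⊗≫ ε_ y yᘁ :
          (yᘁ ⊗ xᘁ) ⊗ (x ⊗ y) ⟶ 𝟙_ V) := by
      rw [← whisker_exchange]; monoidal
    _ = _ := by
      rw [ExactPairing.evaluation_coevaluation]; monoidal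

/-- Associativity of the canonical isomorphisms `γ`. -/
lemma gam_assoc (x y z : V) :
    gamIso y z ▷ xᘁ ≫ gamIso x (y ⊗ z) ≫ ((α_ x y z).hom)ᘁ =
      (α_ zᘁ yᘁ xᘁ).hom ≫ zᘁ ◁ gamIso x y ≫ gamIso (x ⊗ y) z := by
  apply hom_dual_ext (X := (x ⊗ y) ⊗ z)
  have hL : (gamIso y z ▷ xᘁ ≫ gamIso x (y ⊗ z) ≫ ((α_ x y z).hom)ᘁ) ▷ ((x ⊗ y) ⊗ z) ≫
      ε_ ((x ⊗ y) ⊗ z) (((x ⊗ y) ⊗ z)ᘁ) =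
      (𝟙 _ ⊗≫ (zᘁ ⊗ yᘁ) ◁ ε_ x xᘁ ▷ (y ⊗ z) ⊗≫ zᘁ ◁ ε_ y yᘁ ▷ z ⊗≫ ε_ z zᘁ :
        ((zᘁ ⊗ yᘁ) ⊗ xᘁ) ⊗ ((x ⊗ y) ⊗ z) ⟶ 𝟙_ V) := by
    simp only [comp_whiskerRight, Category.assoc]
    rw [rightAdjointMate_comp_evaluation]
    calc
      _ = (𝟙 _ ⊗≫ (gamIso y z ▷ xᘁ) ▷ (x ⊗ (y ⊗ z)) ⊗≫
          (gamIso x (y ⊗ z) ▷ (x ⊗ (y ⊗ z)) ≫ ε_ (x ⊗ (y ⊗ z)) ((x ⊗ (y ⊗ z))ᘁ)) :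
          ((zᘁ ⊗ yᘁ) ⊗ xᘁ) ⊗ ((x ⊗ y) ⊗ z) ⟶ 𝟙_ V) := by
        monoidal
      _ = (𝟙 _ ⊗≫ (gamIso y z ▷ ((xᘁ ⊗ x) ⊗ (y ⊗ z)) ≫
            (y ⊗ z)ᘁ ◁ (ε_ x xᘁ ▷ (y ⊗ z))) ⊗≫ ε_ (y ⊗ z) ((y ⊗ z)ᘁ) :
          ((zᘁ ⊗ yᘁ) ⊗ xᘁ) ⊗ ((x ⊗ y) ⊗ z) ⟶ 𝟙_ V) := by
        rw [gam_eval x (y ⊗ z)]; monoidal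
      _ = (𝟙 _ ⊗≫ (((zᘁ ⊗ yᘁ) ◁ (ε_ x xᘁ ▷ (y ⊗ z))) ≫ gamIso y z ▷ (𝟙_ V ⊗ (y ⊗ z))) ⊗≫
            ε_ (y ⊗ z) ((y ⊗ z)ᘁ) :
          ((zᘁ ⊗ yᘁ) ⊗ xᘁ) ⊗ ((x ⊗ y) ⊗ z) ⟶ 𝟙_ V) := by
        rw [← whisker_exchange]
      _ = (𝟙 _ ⊗≫ (zᘁ ⊗ yᘁ) ◁ ε_ x xᘁ ▷ (y ⊗ z) ⊗≫
            (gamIso y z ▷ (y ⊗ z) ≫ ε_ (y ⊗ z) ((y ⊗ z)ᘁ)) :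
          ((zᘁ ⊗ yᘁ) ⊗ xᘁ) ⊗ ((x ⊗ y) ⊗ z) ⟶ 𝟙_ V) := by
        monoidal
      _ = _ := by
        rw [gam_eval y z]; monoidal
  have hR : ((α_ zᘁ yᘁ xᘁ).hom ≫ zᘁ ◁ gamIso x y ≫ gamIso (x ⊗ y) z) ▷ ((x ⊗ y) ⊗ z) ≫
      ε_ ((x ⊗ y) ⊗ z) (((x ⊗ y) ⊗ z)ᘁ) =
      (𝟙 _ ⊗≫ (zᘁ ⊗ yᘁ) ◁ ε_ x xᘁ ▷ (y ⊗ z) ⊗≫ zᘁ ◁ ε_ y yᘁ ▷ z ⊗≫ ε_ z zᘁ :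
        ((zᘁ ⊗ yᘁ) ⊗ xᘁ) ⊗ ((x ⊗ y) ⊗ z) ⟶ 𝟙_ V) := by
    simp only [comp_whiskerRight, Category.assoc]
    calc
      _ = (𝟙 _ ⊗≫ (zᘁ ◁ gamIso x y) ▷ ((x ⊗ y) ⊗ z) ⊗≫
          (gamIso (x ⊗ y) z ▷ ((x ⊗ y) ⊗ z) ≫ ε_ ((x ⊗ y) ⊗ z) (((x ⊗ y) ⊗ z)ᘁ)) :
          ((zᘁ ⊗ yᘁ) ⊗ xᘁ) ⊗ ((x ⊗ y) ⊗ z) ⟶ 𝟙_ V) := by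
        monoidal
      _ = (𝟙 _ ⊗≫ zᘁ ◁ ((gamIso x y ▷ (x ⊗ y) ≫ ε_ (x ⊗ y) ((x ⊗ y)ᘁ)) ▷ z) ⊗≫ ε_ z zᘁ :
          ((zᘁ ⊗ yᘁ) ⊗ xᘁ) ⊗ ((x ⊗ y) ⊗ z) ⟶ 𝟙_ V) := by
        rw [gam_eval (x ⊗ y) z]; monoidal
      _ = _ := by
        rw [gam_eval x y]; monoidal
  rw [hL, hR]

/-- Associativity of the braiding part (a consequence of the Yang–Baxter relation). -/
lemma braid_assoc (x y z : V) :
    (β_ z y).hom ▷ x ≫ (β_ (y ⊗ z) x).hom ≫ (α_ x y z).inv =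
      (α_ z y x).hom ≫ z ◁ (β_ y x).hom ≫ (β_ z (x ⊗ y)).hom := by
  rw [braiding_tensor_left_hom, braiding_tensor_right_hom]
  rw [← cancel_epi (α_ z y x).inv, ← cancel_mono (α_ x y z).hom]
  simp only [Category.assoc, Iso.hom_inv_id, Iso.inv_hom_id, Category.comp_id,
    Iso.hom_inv_id_assoc, Iso.inv_hom_id_assoc]
  exact yang_baxter z y x

lemma key_rhs (x y z : V) :
    ((zᘁ ⊗ z) ◁ GamIso x y) ≫ GamIso (x ⊗ y) z =
    (𝟙 _ ⊗≫ (zᘁ ⊗ z) ◁ (yᘁ ◁ ((β_ y xᘁ).hom ▷ x)) ⊗≫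
      zᘁ ◁ ((β_ z (yᘁ ⊗ xᘁ)).hom ▷ (y ⊗ x)) ⊗≫
      (((α_ zᘁ yᘁ xᘁ).hom ≫ zᘁ ◁ gamIso x y ≫ gamIso (x ⊗ y) z) ▷ ((z ⊗ y) ⊗ x)) ⊗≫
      (((x ⊗ y) ⊗ z)ᘁ ◁ ((α_ z y x).hom ≫ z ◁ (β_ y x).hom ≫ (β_ z (x ⊗ y)).hom)) :
      (zᘁ ⊗ z) ⊗ ((yᘁ ⊗ y) ⊗ (xᘁ ⊗ x)) ⟶ ((x ⊗ y) ⊗ z)ᘁ ⊗ ((x ⊗ y) ⊗ z)) := by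
  calc
    _ = (𝟙 _ ⊗≫ (zᘁ ⊗ z) ◁ (yᘁ ◁ ((β_ y xᘁ).hom ▷ x)) ⊗≫
        (zᘁ ⊗ z) ◁ (gamIso x y ▷ (y ⊗ x)) ⊗≫
        zᘁ ◁ (((z ⊗ (x ⊗ y)ᘁ) ◁ (β_ y x).hom) ≫ ((β_ z ((x ⊗ y)ᘁ)).hom ▷ (x ⊗ y))) ⊗≫
        (gamIso (x ⊗ y) z ▷ (z ⊗ (x ⊗ y))) ⊗≫ (((x ⊗ y) ⊗ z)ᘁ ◁ (β_ z (x ⊗ y)).hom) :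
        (zᘁ ⊗ z) ⊗ ((yᘁ ⊗ y) ⊗ (xᘁ ⊗ x)) ⟶ ((x ⊗ y) ⊗ z)ᘁ ⊗ ((x ⊗ y) ⊗ z)) := by
      dsimp only [GamIso]
      rw [tensorHom_def (gamIso x y) (β_ y x).hom,
        tensorHom_def (gamIso (x ⊗ y) z) (β_ z (x ⊗ y)).hom]
      monoidal
    _ = (𝟙 _ ⊗≫ (zᘁ ⊗ z) ◁ (yᘁ ◁ ((β_ y xᘁ).hom ▷ x)) ⊗≫
        zᘁ ◁ ((z ◁ gamIso x y ≫ (β_ z ((x ⊗ y)ᘁ)).hom) ▷ (y ⊗ x)) ⊗≫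
        ((((zᘁ ⊗ (x ⊗ y)ᘁ) ⊗ z) ◁ (β_ y x).hom) ≫ ((gamIso (x ⊗ y) z ▷ z) ▷ (x ⊗ y))) ⊗≫
        (((x ⊗ y) ⊗ z)ᘁ ◁ (β_ z (x ⊗ y)).hom) :
        (zᘁ ⊗ z) ⊗ ((yᘁ ⊗ y) ⊗ (xᘁ ⊗ x)) ⟶ ((x ⊗ y) ⊗ z)ᘁ ⊗ ((x ⊗ y) ⊗ z)) := by
      rw [whisker_exchange ((β_ z ((x ⊗ y)ᘁ)).hom) ((β_ y x).hom)]; monoidal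
    _ = (𝟙 _ ⊗≫ (zᘁ ⊗ z) ◁ (yᘁ ◁ ((β_ y xᘁ).hom ▷ x)) ⊗≫
        zᘁ ◁ ((z ◁ gamIso x y ≫ (β_ z ((x ⊗ y)ᘁ)).hom) ▷ (y ⊗ x)) ⊗≫
        ((gamIso (x ⊗ y) z ▷ z) ▷ (y ⊗ x)) ⊗≫
        ((((x ⊗ y) ⊗ z)ᘁ ⊗ z) ◁ (β_ y x).hom) ⊗≫
        (((x ⊗ y) ⊗ z)ᘁ ◁ (β_ z (x ⊗ y)).hom) :
        (zᘁ ⊗ z) ⊗ ((yᘁ ⊗ y) ⊗ (xᘁ ⊗ x)) ⟶ ((x ⊗ y) ⊗ z)ᘁ ⊗ ((x ⊗ y) ⊗ z)) := by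
      rw [whisker_exchange (gamIso (x ⊗ y) z ▷ z) ((β_ y x).hom)]; monoidal
    _ = _ := by
      rw [braiding_naturality_right z (gamIso x y)]; monoidal

lemma key_lhs (x y z : V) :
    (α_ (zᘁ ⊗ z) (yᘁ ⊗ y) (xᘁ ⊗ x)).inv ≫ (GamIso y z ▷ (xᘁ ⊗ x)) ≫
        GamIso x (y ⊗ z) ≫ (((α_ x y z).hom)ᘁ ⊗ₘ (α_ x y z).inv) =
    (𝟙 _ ⊗≫ (zᘁ ⊗ z) ◁ (yᘁ ◁ ((β_ y xᘁ).hom ▷ x)) ⊗≫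
      zᘁ ◁ ((β_ z (yᘁ ⊗ xᘁ)).hom ▷ (y ⊗ x)) ⊗≫
      ((gamIso y z ▷ xᘁ ≫ gamIso x (y ⊗ z) ≫ ((α_ x y z).hom)ᘁ) ▷ ((z ⊗ y) ⊗ x)) ⊗≫
      (((x ⊗ y) ⊗ z)ᘁ ◁ ((β_ z y).hom ▷ x ≫ (β_ (y ⊗ z) x).hom ≫ (α_ x y z).inv)) :
      (zᘁ ⊗ z) ⊗ ((yᘁ ⊗ y) ⊗ (xᘁ ⊗ x)) ⟶ ((x ⊗ y) ⊗ z)ᘁ ⊗ ((x ⊗ y) ⊗ z)) := by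
  calc
    _ = (𝟙 _ ⊗≫ (zᘁ ◁ ((β_ z yᘁ).hom ▷ y)) ▷ (xᘁ ⊗ x) ⊗≫
        gamIso y z ▷ ((z ⊗ y) ⊗ (xᘁ ⊗ x)) ⊗≫
        (y ⊗ z)ᘁ ◁ ((((β_ z y).hom ▷ xᘁ) ≫ (β_ (y ⊗ z) xᘁ).hom) ▷ x) ⊗≫
        gamIso x (y ⊗ z) ▷ ((y ⊗ z) ⊗ x) ⊗≫
        (x ⊗ (y ⊗ z))ᘁ ◁ (β_ (y ⊗ z) x).hom ⊗≫
        ((α_ x y z).hom)ᘁ ▷ (x ⊗ (y ⊗ z)) ⊗≫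
        ((x ⊗ y) ⊗ z)ᘁ ◁ (α_ x y z).inv :
        (zᘁ ⊗ z) ⊗ ((yᘁ ⊗ y) ⊗ (xᘁ ⊗ x)) ⟶ ((x ⊗ y) ⊗ z)ᘁ ⊗ ((x ⊗ y) ⊗ z)) := by
      dsimp only [GamIso]
      rw [tensorHom_def (gamIso y z) (β_ z y).hom,
        tensorHom_def (gamIso x (y ⊗ z)) (β_ (y ⊗ z) x).hom,
        tensorHom_def (((α_ x y z).hom)ᘁ) ((α_ x y z).inv)]
      monoidal
    _ = (𝟙 _ ⊗≫ (zᘁ ◁ ((β_ z yᘁ).hom ▷ y)) ▷ (xᘁ ⊗ x) ⊗≫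
        gamIso y z ▷ ((z ⊗ y) ⊗ (xᘁ ⊗ x)) ⊗≫
        (y ⊗ z)ᘁ ◁ ((β_ (z ⊗ y) xᘁ).hom ▷ x) ⊗≫
        (((y ⊗ z)ᘁ ⊗ xᘁ) ◁ ((β_ z y).hom ▷ x) ≫ gamIso x (y ⊗ z) ▷ ((y ⊗ z) ⊗ x)) ⊗≫
        (x ⊗ (y ⊗ z))ᘁ ◁ (β_ (y ⊗ z) x).hom ⊗≫
        ((α_ x y z).hom)ᘁ ▷ (x ⊗ (y ⊗ z)) ⊗≫
        ((x ⊗ y) ⊗ z)ᘁ ◁ (α_ x y z).inv :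
        (zᘁ ⊗ z) ⊗ ((yᘁ ⊗ y) ⊗ (xᘁ ⊗ x)) ⟶ ((x ⊗ y) ⊗ z)ᘁ ⊗ ((x ⊗ y) ⊗ z)) := by
      rw [braiding_naturality_left (β_ z y).hom xᘁ]; monoidal
    _ = (𝟙 _ ⊗≫ (zᘁ ◁ ((β_ z yᘁ).hom ▷ y)) ▷ (xᘁ ⊗ x) ⊗≫
        gamIso y z ▷ ((z ⊗ y) ⊗ (xᘁ ⊗ x)) ⊗≫
        (y ⊗ z)ᘁ ◁ ((β_ (z ⊗ y) xᘁ).hom ▷ x) ⊗≫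
        gamIso x (y ⊗ z) ▷ ((z ⊗ y) ⊗ x) ⊗≫
        ((x ⊗ (y ⊗ z))ᘁ ◁ ((β_ z y).hom ▷ x ≫ (β_ (y ⊗ z) x).hom ≫ (α_ x y z).inv) ≫
          ((α_ x y z).hom)ᘁ ▷ ((x ⊗ y) ⊗ z)) :
        (zᘁ ⊗ z) ⊗ ((yᘁ ⊗ y) ⊗ (xᘁ ⊗ x)) ⟶ ((x ⊗ y) ⊗ z)ᘁ ⊗ ((x ⊗ y) ⊗ z)) := by
      rw [whisker_exchange (gamIso x (y ⊗ z)) ((β_ z y).hom ▷ x)]; monoidal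
    _ = (𝟙 _ ⊗≫ (zᘁ ◁ ((β_ z yᘁ).hom ▷ y)) ▷ (xᘁ ⊗ x) ⊗≫
        (gamIso y z ▷ ((z ⊗ (y ⊗ xᘁ)) ⊗ x) ≫
          (y ⊗ z)ᘁ ◁ ((z ◁ (β_ y xᘁ).hom) ▷ x)) ⊗≫
        (y ⊗ z)ᘁ ◁ (((β_ z xᘁ).hom ▷ y) ▷ x) ⊗≫
        gamIso x (y ⊗ z) ▷ ((z ⊗ y) ⊗ x) ⊗≫
        ((α_ x y z).hom)ᘁ ▷ ((z ⊗ y) ⊗ x) ⊗≫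
        ((x ⊗ y) ⊗ z)ᘁ ◁ ((β_ z y).hom ▷ x ≫ (β_ (y ⊗ z) x).hom ≫ (α_ x y z).inv) :
        (zᘁ ⊗ z) ⊗ ((yᘁ ⊗ y) ⊗ (xᘁ ⊗ x)) ⟶ ((x ⊗ y) ⊗ z)ᘁ ⊗ ((x ⊗ y) ⊗ z)) := by
      rw [whisker_exchange (((α_ x y z).hom)ᘁ)
          ((β_ z y).hom ▷ x ≫ (β_ (y ⊗ z) x).hom ≫ (α_ x y z).inv),
        braiding_tensor_left_hom z y xᘁ]
      monoidal
    _ = (𝟙 _ ⊗≫ ((zᘁ ◁ (β_ z yᘁ).hom) ▷ ((y ⊗ xᘁ) ⊗ x) ≫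
          (zᘁ ⊗ (yᘁ ⊗ z)) ◁ ((β_ y xᘁ).hom ▷ x)) ⊗≫
        (gamIso y z ▷ ((z ⊗ xᘁ) ⊗ (y ⊗ x)) ≫
          (y ⊗ z)ᘁ ◁ ((β_ z xᘁ).hom ▷ (y ⊗ x))) ⊗≫
        gamIso x (y ⊗ z) ▷ ((z ⊗ y) ⊗ x) ⊗≫
        ((α_ x y z).hom)ᘁ ▷ ((z ⊗ y) ⊗ x) ⊗≫
        ((x ⊗ y) ⊗ z)ᘁ ◁ ((β_ z y).hom ▷ x ≫ (β_ (y ⊗ z) x).hom ≫ (α_ x y z).inv) :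
        (zᘁ ⊗ z) ⊗ ((yᘁ ⊗ y) ⊗ (xᘁ ⊗ x)) ⟶ ((x ⊗ y) ⊗ z)ᘁ ⊗ ((x ⊗ y) ⊗ z)) := by
      rw [← whisker_exchange (gamIso y z) ((z ◁ (β_ y xᘁ).hom) ▷ x)]; monoidal
    _ = (𝟙 _ ⊗≫ (zᘁ ⊗ (z ⊗ yᘁ)) ◁ ((β_ y xᘁ).hom ▷ x) ⊗≫
        (zᘁ ◁ (β_ z yᘁ).hom) ▷ ((xᘁ ⊗ y) ⊗ x) ⊗≫
        (zᘁ ⊗ yᘁ) ◁ ((β_ z xᘁ).hom ▷ (y ⊗ x)) ⊗≫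
        gamIso y z ▷ ((xᘁ ⊗ z) ⊗ (y ⊗ x)) ⊗≫
        gamIso x (y ⊗ z) ▷ ((z ⊗ y) ⊗ x) ⊗≫
        ((α_ x y z).hom)ᘁ ▷ ((z ⊗ y) ⊗ x) ⊗≫
        ((x ⊗ y) ⊗ z)ᘁ ◁ ((β_ z y).hom ▷ x ≫ (β_ (y ⊗ z) x).hom ≫ (α_ x y z).inv) :
        (zᘁ ⊗ z) ⊗ ((yᘁ ⊗ y) ⊗ (xᘁ ⊗ x)) ⟶ ((x ⊗ y) ⊗ z)ᘁ ⊗ ((x ⊗ y) ⊗ z)) := by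
      rw [← whisker_exchange (zᘁ ◁ (β_ z yᘁ).hom) ((β_ y xᘁ).hom ▷ x),
        ← whisker_exchange (gamIso y z) ((β_ z xᘁ).hom ▷ (y ⊗ x))]
      monoidal
    _ = _ := by
      rw [braiding_tensor_right_hom z yᘁ xᘁ]; monoidal

end Auxiliary

/-- `Γ_{x,y⊗z} ∘ (Γ_{y,z} ⊗ id_{x*⊗x}) = Γ_{x⊗y,z} ∘ (id_{z*⊗z} ⊗ Γ_{x,y})`,
the duals of `x⊗(y⊗z)` and `(x⊗y)⊗z` being identified via the canonical isomorphisms. -/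
theorem stmt14 {V : Type u} [Category.{v} V] [MonoidalCategory V] [BraidedCategory V]
    [RightRigidCategory V]
    (hα : ∀ X Y Z : V, (X ⊗ Y) ⊗ Z = X ⊗ (Y ⊗ Z))
    (hρ : ∀ X : V, X ⊗ 𝟙_ V = X) (hl : ∀ X : V, 𝟙_ V ⊗ X = X)
    (x y z : V) :
    (α_ (zᘁ ⊗ z) (yᘁ ⊗ y) (xᘁ ⊗ x)).inv ≫ (GamIso y z ▷ (xᘁ ⊗ x)) ≫
        GamIso x (y ⊗ z) ≫ (((α_ x y z).hom)ᘁ ⊗ₘ (α_ x y z).inv) =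
      ((zᘁ ⊗ z) ◁ GamIso x y) ≫ GamIso (x ⊗ y) z := by
  rw [key_lhs, key_rhs, gam_assoc, braid_assoc]
end
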